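/- Let K be an algebraically closed field of characteristic 2, d ∈ K, and R = R(2,0,d) = K⟨X,Y⟩/I with I = ⟨X²+YXY, Y²+XYX+d(XY)², X(YX)², Y(XY)²⟩. Then R is a finite-dimensional K-algebra of dimension 8, and the images of the monomials 1, X, Y, XY, YX, XYX, YXY, (XY)² form a K-basis B of R. -/

import Mathlib

/-!
STATEMENT 1: Let `K` be an algebraically closed field of characteristic 2, `d ∈ K`, and
`R = R(2,0,d) = K⟨X,Y⟩/I` with `I = ⟨X²+YXY, Y²+XYX+d(XY)², X(YX)², Y(XY)²⟩`.
Then `R` is a finite dimensional `K`-algebra of dimension `8`, and the images of the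
monomials `1, X, Y, XY, YX, XYX, YXY, (XY)²` form a `K`-basis of `R`.
-/

noncomputable section

namespace QuatBV

variable (K : Type) [Field K] (d : K)

abbrev F := FreeAlgebra K (Fin 2)

def Xg : F K := FreeAlgebra.ι K 0
def Yg : F K := FreeAlgebra.ι K 1

/-- The four defining relators of `R(2,0,d)`; the quotient `RingQuot (Rel K d)` is the
quotient of the free algebra `K⟨X,Y⟩` by the two-sided ideal generated by them. -/
inductive Rel (d : K) : F K → F K → Prop
  | rx : Rel d (Xg K * Xg K + Yg K * Xg K * Yg K) 0
  | ry : Rel d (Yg K * Yg K + Xg K * Yg K * Xg K + d • (Xg K * Yg K * Xg K * Yg K)) 0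
  | zx : Rel d (Xg K * (Yg K * Xg K) ^ 2) 0
  | zy : Rel d (Yg K * (Xg K * Yg K) ^ 2) 0

/-- The algebra `R(2,0,d)`. -/
abbrev R := RingQuot (Rel K d)

def x : R K d := RingQuot.mkAlgHom K (Rel K d) (Xg K)
def y : R K d := RingQuot.mkAlgHom K (Rel K d) (Yg K)

-- auxiliary
@[simp] theorem v8_5 {α : Type*} (a b c d e f g h : α) : ![a,b,c,d,e,f,g,h] (5 : Fin 8) = f := rfl
@[simp] theorem v8_6 {α : Type*} (a b c d e f g h : α) : ![a,b,c,d,e,f,g,h] (6 : Fin 8) = g := rfl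
@[simp] theorem v8_7 {α : Type*} (a b c d e f g h : α) : ![a,b,c,d,e,f,g,h] (7 : Fin 8) = h := rfl

def fx (v : Fin 8 → K) : Fin 8 → K := ![0, v 0, 0, v 2, 0, v 4, v 1, v 6]
def fy (v : Fin 8 → K) : Fin 8 → K := ![0, 0, v 0, 0, v 1, v 2, v 3, d * v 2 + v 5]

def LX : (Fin 8 → K) →ₗ[K] (Fin 8 → K) where
  toFun := fx K
  map_add' u v := by funext j; fin_cases j <;> simp [fx]
  map_smul' c v := by funext j; fin_cases j <;> simp [fx]

def LY : (Fin 8 → K) →ₗ[K] (Fin 8 → K) where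
  toFun := fy K d
  map_add' u v := by funext j; fin_cases j <;> (simp [fy]; try ring)
  map_smul' c v := by funext j; fin_cases j <;> (simp [fy]; try ring)

def φ0 : F K →ₐ[K] Module.End K (Fin 8 → K) :=
  FreeAlgebra.lift K ![LX K, LY K d]

theorem φ0_rel (h2 : ∀ a : K, a + a = 0) :
    ∀ ⦃a b : F K⦄, Rel K d a b → φ0 K d a = φ0 K d b := by
  intro a b r
  have hx : φ0 K d (Xg K) = LX K := by
    simp [φ0, Xg]
  have hy : φ0 K d (Yg K) = LY K d := by
    simp [φ0, Yg]
  cases r with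
  | rx =>
    ext v j
    simp only [map_add, map_mul, hx, hy, LinearMap.add_apply, Module.End.mul_apply, map_zero,
      LinearMap.zero_apply, LX, LY, LinearMap.coe_mk, AddHom.coe_mk]
    fin_cases j <;> simp [fx, fy, h2]
  | ry =>
    ext v j
    simp only [map_add, map_mul, map_smul, hx, hy, LinearMap.add_apply, Module.End.mul_apply,
      LinearMap.smul_apply, map_zero, LinearMap.zero_apply, LX, LY, LinearMap.coe_mk,
      AddHom.coe_mk, Pi.smul_apply, smul_eq_mul]
    fin_cases j <;> (simp [fx, fy, h2, mul_add]; try (ring_nf; simp [h2, two_mul, mul_comm]))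
  | zx =>
    ext v j
    simp only [map_mul, map_pow, pow_two, map_zero, hx, hy, Module.End.mul_apply,
      LinearMap.zero_apply, LX, LY, LinearMap.coe_mk, AddHom.coe_mk]
    fin_cases j <;> simp [fx, fy]
  | zy =>
    ext v j
    simp only [map_mul, map_pow, pow_two, map_zero, hx, hy, Module.End.mul_apply,
      LinearMap.zero_apply, LX, LY, LinearMap.coe_mk, AddHom.coe_mk]
    fin_cases j <;> simp [fx, fy]

def ψ (h2 : ∀ a : K, a + a = 0) : R K d →ₐ[K] Module.End K (Fin 8 → K) :=
  RingQuot.liftAlgHom K ⟨φ0 K d, φ0_rel K d h2⟩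

theorem ψ_x (h2 : ∀ a : K, a + a = 0) : ψ K d h2 (x K d) = LX K := by
  simp [ψ, x, Xg, φ0]

theorem ψ_y (h2 : ∀ a : K, a + a = 0) : ψ K d h2 (y K d) = LY K d := by
  simp [ψ, y, Yg, φ0]

def mlin (h2 : ∀ a : K, a + a = 0) : R K d →ₗ[K] (Fin 8 → K) where
  toFun r := ψ K d h2 r (Pi.single (0 : Fin 8) (1 : K))
  map_add' u v := by simp
  map_smul' c v := by simp


def bfam : Fin 8 → R K d :=
  ![1, x K d, y K d, x K d * y K d, y K d * x K d,
    x K d * y K d * x K d, y K d * x K d * y K d,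
    (x K d * y K d) ^ 2]

theorem m_b (h2 : ∀ a : K, a + a = 0) :
    ⇑(mlin K d h2) ∘ bfam K d = fun i => Pi.single i (1 : K) := by
  have e : ∀ r : R K d, mlin K d h2 r = ψ K d h2 r (Pi.single (0 : Fin 8) (1 : K)) :=
    fun r => rfl
  funext i
  fin_cases i <;>
  · show mlin K d h2 _ = _
    rw [e]
    funext j
    fin_cases j <;>
      simp [bfam, map_mul, map_one, ψ_x, ψ_y, LX, LY, fx, fy, Pi.single_apply, pow_two,
        Module.End.mul_apply, Module.End.one_apply]

section RelLemmas
variable {K : Type} [Field K] {d : K}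

local notation "X" => x K d
local notation "Y" => y K d

variable (h2 : ∀ a : R K d, a + a = 0)
include h2

theorem cancel {a b : R K d} (h : a + b = 0) : a = b :=
  (eq_neg_of_add_eq_zero_left h).trans (neg_eq_of_add_eq_zero_left (h2 b))

theorem hxx : X * X = Y * X * Y := by
  apply cancel h2
  have := RingQuot.mkAlgHom_rel K (Rel.rx (K := K) (d := d))
  simpa [x, y, map_add, map_mul] using this

theorem hyy : Y * Y = X * Y * X + d • (X * Y * X * Y) := by
  apply cancel h2
  have := RingQuot.mkAlgHom_rel K (Rel.ry (K := K) (d := d))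
  rw [← add_assoc]
  simpa [x, y, map_add, map_mul, map_smul] using this

theorem hzx : X * Y * X * Y * X = 0 := by
  have := RingQuot.mkAlgHom_rel K (Rel.zx (K := K) (d := d))
  simp only [map_mul, map_pow, map_zero] at this
  rw [show X * Y * X * Y * X = X * (Y * X) ^ 2 by noncomm_ring]
  simpa [x, y] using this

theorem hzy : Y * (X * Y) ^ 2 = 0 := by
  have := RingQuot.mkAlgHom_rel K (Rel.zy (K := K) (d := d))
  simp only [map_mul, map_pow, map_zero] at this
  simpa [x, y] using this

theorem hzy' : Y * X * Y * X * Y = 0 := by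
  rw [show Y * X * Y * X * Y = Y * (X * Y) ^ 2 by noncomm_ring, hzy h2]

theorem hyyy : Y * Y * Y = Y * X * Y * X := by
  rw [show Y * Y * Y = Y * (Y * Y) by noncomm_ring, hyy h2, mul_add, mul_smul_comm,
    show Y * (X * Y * X * Y) = Y * X * Y * X * Y by noncomm_ring, hzy' h2, smul_zero, add_zero,
    show Y * (X * Y * X) = Y * X * Y * X by noncomm_ring]

theorem L1 : Y * X * X * Y * X = 0 := by
  rw [show Y * X * X * Y * X = Y * (X * X) * (Y * X) by noncomm_ring, hxx h2,
    show Y * (Y * X * Y) * (Y * X) = (Y * Y) * (X * Y * Y * X) by noncomm_ring, hyy h2,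
    add_mul, smul_mul_assoc,
    show X * Y * X * Y * (X * Y * Y * X) = (X * Y * X * Y * X) * (Y * Y * X) by noncomm_ring,
    hzx h2, zero_mul, smul_zero, add_zero,
    show X * Y * X * (X * Y * Y * X) = X * Y * (X * X) * (Y * Y) * X by noncomm_ring,
    hxx h2, hyy h2, mul_add, mul_smul_comm, add_mul, smul_mul_assoc,
    show X * Y * (Y * X * Y) * (X * Y * X) * X = (X * Y * Y) * (X * Y * X * Y * X) * X
      by noncomm_ring,
    show X * Y * (Y * X * Y) * (X * Y * X * Y) * X = (X * Y * Y) * (X * Y * X * Y * X) * (Y * X)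
      by noncomm_ring,
    hzx h2]
  simp

theorem hxxy : X * X * Y = 0 := by
  rw [show X * X * Y = (X * X) * Y by rfl, hxx h2,
    show (Y * X * Y) * Y = Y * X * (Y * Y) by noncomm_ring, hyy h2, mul_add, mul_smul_comm,
    show Y * X * (X * Y * X) = Y * X * X * Y * X by noncomm_ring, L1 h2,
    show Y * X * (X * Y * X * Y) = (Y * X * X * Y * X) * Y by noncomm_ring, L1 h2]
  simp

theorem hyyx : Y * Y * X = 0 := by
  rw [show Y * Y * X = (Y * Y) * X by rfl, hyy h2, add_mul, smul_mul_assoc,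
    show (X * Y * X * Y) * X = X * Y * X * Y * X by rfl, hzx h2, smul_zero, add_zero,
    show (X * Y * X) * X = X * Y * (X * X) by noncomm_ring, hxx h2,
    show X * Y * (Y * X * Y) = X * (Y * Y) * (X * Y) by noncomm_ring, hyy h2,
    mul_add, mul_smul_comm, add_mul, smul_mul_assoc,
    show X * (X * Y * X) * (X * Y) = (X * X * Y) * (X * X * Y) by noncomm_ring, hxxy h2,
    show X * (X * Y * X * Y) * (X * Y) = (X * X * Y) * (X * Y * X * Y) by noncomm_ring, hxxy h2]
  simp

theorem hyxyx : Y * X * Y * X = X * Y * X * Y := by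
  rw [← hyyy h2, show Y * Y * Y = (Y * Y) * Y by rfl, hyy h2, add_mul, smul_mul_assoc,
    show (X * Y * X * Y) * Y = X * Y * X * (Y * Y) by noncomm_ring, hyy h2, mul_add, mul_smul_comm,
    show X * Y * X * (X * Y * X) = (X * Y) * (X * X * Y) * X by noncomm_ring, hxxy h2,
    show X * Y * X * (X * Y * X * Y) = (X * Y) * (X * X * Y) * (X * Y) by noncomm_ring, hxxy h2]
  simp

end RelLemmas

section Span
variable {K : Type} [Field K] {d : K}
local notation "X" => x K d
local notation "Y" => y K d
variable (h2 : ∀ a : R K d, a + a = 0)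

theorem hbmem (i : Fin 8) : bfam K d i ∈ Submodule.span K (Set.range (bfam K d)) :=
  Submodule.subset_span ⟨i, rfl⟩

include h2

theorem xmem (i : Fin 8) :
    X * bfam K d i ∈ Submodule.span K (Set.range (bfam K d)) := by
  have hb := hbmem (K := K) (d := d)
  fin_cases i
  · show X * 1 ∈ _; rw [mul_one]; exact hb 1
  · show X * X ∈ _; rw [hxx h2]; exact hb 6
  · show X * Y ∈ _; exact hb 3
  · show X * (X * Y) ∈ _
    rw [show X * (X * Y) = X * X * Y by noncomm_ring, hxxy h2]; exact zero_mem _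
  · show X * (Y * X) ∈ _
    rw [show X * (Y * X) = X * Y * X by noncomm_ring]; exact hb 5
  · show X * (X * Y * X) ∈ _
    rw [show X * (X * Y * X) = (X * X * Y) * X by noncomm_ring, hxxy h2, zero_mul]
    exact zero_mem _
  · show X * (Y * X * Y) ∈ _
    rw [show X * (Y * X * Y) = (X * Y) ^ 2 by noncomm_ring]; exact hb 7
  · show X * (X * Y) ^ 2 ∈ _
    rw [show X * (X * Y) ^ 2 = (X * X * Y) * (X * Y) by noncomm_ring, hxxy h2, zero_mul]
    exact zero_mem _

theorem ymem (i : Fin 8) :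
    Y * bfam K d i ∈ Submodule.span K (Set.range (bfam K d)) := by
  have hb := hbmem (K := K) (d := d)
  fin_cases i
  · show Y * 1 ∈ _; rw [mul_one]; exact hb 2
  · show Y * X ∈ _; exact hb 4
  · show Y * Y ∈ _
    rw [hyy h2, show X * Y * X * Y = (X * Y) ^ 2 by noncomm_ring]
    exact add_mem (hb 5) (Submodule.smul_mem _ d (hb 7))
  · show Y * (X * Y) ∈ _
    rw [show Y * (X * Y) = Y * X * Y by noncomm_ring]; exact hb 6
  · show Y * (Y * X) ∈ _
    rw [show Y * (Y * X) = Y * Y * X by noncomm_ring, hyyx h2]; exact zero_mem _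
  · show Y * (X * Y * X) ∈ _
    rw [show Y * (X * Y * X) = Y * X * Y * X by noncomm_ring, hyxyx h2,
      show X * Y * X * Y = (X * Y) ^ 2 by noncomm_ring]
    exact hb 7
  · show Y * (Y * X * Y) ∈ _
    rw [show Y * (Y * X * Y) = (Y * Y * X) * Y by noncomm_ring, hyyx h2, zero_mul]
    exact zero_mem _
  · show Y * (X * Y) ^ 2 ∈ _
    rw [hzy h2]; exact zero_mem _

theorem span_top : ⊤ ≤ Submodule.span K (Set.range (bfam K d)) := by
  have hb := hbmem (K := K) (d := d)
  have hxmul : ∀ s ∈ Submodule.span K (Set.range (bfam K d)),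
      X * s ∈ Submodule.span K (Set.range (bfam K d)) := by
    intro s hs
    induction hs using Submodule.span_induction with
    | mem s hs => obtain ⟨i, rfl⟩ := hs; exact xmem h2 i
    | zero => rw [mul_zero]; exact zero_mem _
    | add a b _ _ ha hb => rw [mul_add]; exact add_mem ha hb
    | smul c a _ ha => rw [mul_smul_comm]; exact Submodule.smul_mem _ c ha
  have hymul : ∀ s ∈ Submodule.span K (Set.range (bfam K d)),
      Y * s ∈ Submodule.span K (Set.range (bfam K d)) := by
    intro s hs
    induction hs using Submodule.span_induction with
    | mem s hs => obtain ⟨i, rfl⟩ := hs; exact ymem h2 i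
    | zero => rw [mul_zero]; exact zero_mem _
    | add a b _ _ ha hb => rw [mul_add]; exact add_mem ha hb
    | smul c a _ ha => rw [mul_smul_comm]; exact Submodule.smul_mem _ c ha
  have key : ∀ f : F K, ∀ s ∈ Submodule.span K (Set.range (bfam K d)),
      RingQuot.mkAlgHom K (Rel K d) f * s ∈ Submodule.span K (Set.range (bfam K d)) := by
    intro f
    induction f using FreeAlgebra.induction with
    | grade0 r =>
      intro s hs
      rw [AlgHom.commutes, ← Algebra.smul_def]
      exact Submodule.smul_mem _ r hs
    | grade1 i =>
      intro s hs
      fin_cases i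
      · exact hxmul s hs
      · exact hymul s hs
    | mul a b ha hb' =>
      intro s hs
      rw [map_mul, mul_assoc]
      exact ha _ (hb' _ hs)
    | add a b ha hb' =>
      intro s hs
      rw [map_add, add_mul]
      exact add_mem (ha s hs) (hb' s hs)
  intro r _
  obtain ⟨f, rfl⟩ := RingQuot.mkAlgHom_surjective K (Rel K d) r
  simpa using key f 1 (hb 0)

end Span

theorem dimension_and_basis_of_R20d
    (K : Type) [Field K] [IsAlgClosed K] (hK : ringChar K = 2) (d : K) :
    Module.finrank K (R K d) = 8 ∧
    ∃ B : Module.Basis (Fin 8) K (R K d),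
      (B : Fin 8 → R K d) =
        ![1, x K d, y K d, x K d * y K d, y K d * x K d,
          x K d * y K d * x K d, y K d * x K d * y K d,
          (x K d * y K d) ^ 2] := by
  haveI : CharP K 2 := hK ▸ ringChar.charP K
  have h2K : ∀ a : K, a + a = 0 := fun a => CharTwo.add_self_eq_zero a
  have h20 : (2 : K) = 0 := by exact_mod_cast CharP.cast_eq_zero K 2
  have h2R : ∀ a : R K d, a + a = 0 := fun a => by
    rw [← two_smul K a, h20, zero_smul]
  have hli : LinearIndependent K (bfam K d) := by
    apply LinearIndependent.of_comp (mlin K d h2K)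
    rw [m_b K d h2K]
    have hbf : ⇑(Pi.basisFun K (Fin 8)) = fun i => Pi.single i (1 : K) := by
      funext i; simp
    exact hbf ▸ (Pi.basisFun K (Fin 8)).linearIndependent
  have B : Module.Basis (Fin 8) K (R K d) := Module.Basis.mk hli (span_top h2R)
  refine ⟨?_, Module.Basis.mk hli (span_top h2R), ?_⟩
  · rw [Module.finrank_eq_card_basis (Module.Basis.mk hli (span_top h2R))]
    simp
  · rw [Module.Basis.coe_mk]
    rfl

end QuatBV
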